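/- Let 0 < α ≤ β, let a : (0,1) → [α,β] be measurable, and let r ∈ L^∞(0,1). Define d₁ := ⟨a⁻¹⟩⁻²·[⟨a·r²⟩ − ⟨a⟩⁻¹·⟨a·r⟩²], d₂ := ⟨a³·r²⟩ − ⟨a⟩⁻¹·⟨a²·r⟩², and d₃ := ⟨a⁻¹⟩⁻¹·[⟨a²·r²⟩ − ⟨a⟩⁻¹·⟨a·r⟩·⟨a²·r⟩]. Then for all real numbers u and v, the symmetric 3×3 matrix [[d₁·v², d₃·u·v, 0], [d₃·u·v, d₂·u², 0], [0, 0, d₂·u²]] is positive semidefinite. -/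

import Mathlib

open MeasureTheory

/-- Average over the unit interval `(0,1)`. -/
noncomputable def avg01 (f : ℝ → ℝ) : ℝ := ∫ y in Set.Ioo (0 : ℝ) 1, f y

/-- `d₁ = ⟨a⁻¹⟩⁻²[⟨a r²⟩ − ⟨a⟩⁻¹⟨a r⟩²]`. -/
noncomputable def dOne (a r : ℝ → ℝ) : ℝ :=
  ((avg01 fun y => (a y)⁻¹) ^ 2)⁻¹ *
    ((avg01 fun y => a y * r y ^ 2) - (avg01 a)⁻¹ * (avg01 fun y => a y * r y) ^ 2)

/-- `d₂ = ⟨a³ r²⟩ − ⟨a⟩⁻¹⟨a² r⟩²`. -/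
noncomputable def dTwo (a r : ℝ → ℝ) : ℝ :=
  (avg01 fun y => a y ^ 3 * r y ^ 2) - (avg01 a)⁻¹ * (avg01 fun y => a y ^ 2 * r y) ^ 2

/-- `d₃ = ⟨a⁻¹⟩⁻¹[⟨a² r²⟩ − ⟨a⟩⁻¹⟨a r⟩⟨a² r⟩]`. -/
noncomputable def dThree (a r : ℝ → ℝ) : ℝ :=
  (avg01 fun y => (a y)⁻¹)⁻¹ *
    ((avg01 fun y => a y ^ 2 * r y ^ 2) -
      (avg01 a)⁻¹ * (avg01 fun y => a y * r y) * (avg01 fun y => a y ^ 2 * r y))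

lemma layered_key (α β : ℝ) (hα : 0 < α) (hαβ : α ≤ β)
    (a r : ℝ → ℝ) (ha : Measurable a) (hr : Measurable r)
    (haI : ∀ y ∈ Set.Ioo (0 : ℝ) 1, a y ∈ Set.Icc α β)
    (C : ℝ)
    (hCae : ∀ᵐ y ∂(volume.restrict (Set.Ioo (0 : ℝ) 1)), |r y| ≤ C) :
    (0 < avg01 a) ∧ (0 < avg01 fun y => (a y)⁻¹) ∧
    ∀ s t : ℝ, 0 ≤
      ((avg01 fun y => a y * r y ^ 2) - (avg01 a)⁻¹ * (avg01 fun y => a y * r y) ^ 2) * s ^ 2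
      + 2 * ((avg01 fun y => a y ^ 2 * r y ^ 2) -
          (avg01 a)⁻¹ * (avg01 fun y => a y * r y) * (avg01 fun y => a y ^ 2 * r y)) * s * t
      + ((avg01 fun y => a y ^ 3 * r y ^ 2) -
          (avg01 a)⁻¹ * (avg01 fun y => a y ^ 2 * r y) ^ 2) * t ^ 2 := by
  set μ := volume.restrict (Set.Ioo (0 : ℝ) 1) with hμ
  have hmem : ∀ᵐ y ∂μ, y ∈ Set.Ioo (0 : ℝ) 1 := ae_restrict_mem measurableSet_Ioo
  have hab : ∀ᵐ y ∂μ, α ≤ a y ∧ a y ≤ β :=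
    hmem.mono fun y hy => ⟨(haI y hy).1, (haI y hy).2⟩
  haveI : IsFiniteMeasure μ := ⟨by simp [hμ, Real.volume_Ioo]⟩
  -- integrability helper
  have hint : ∀ (f : ℝ → ℝ), Measurable f → (∀ D : ℝ, True) → True := fun _ _ _ => trivial
  have hbdd : ∀ (f : ℝ → ℝ) (D : ℝ), Measurable f → (∀ᵐ y ∂μ, |f y| ≤ D) → Integrable f μ := by
    intro f D hf hD
    exact (integrable_const D).mono' hf.aestronglyMeasurable (hD.mono fun y h => by simpa using h)
  have Ia : Integrable a μ := hbdd a β ha (hab.mono fun y ⟨h1, h2⟩ => abs_le.2 ⟨by linarith, h2⟩)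
  have Iar : Integrable (fun y => a y * r y) μ :=
    hbdd _ (β * C) (ha.mul hr) ((hab.and hCae).mono fun y ⟨⟨h1, h2⟩, h3⟩ => by
      rw [abs_mul, abs_of_nonneg (by linarith : (0:ℝ) ≤ a y)]
      exact mul_le_mul h2 h3 (abs_nonneg _) (by linarith))
  have Iar2 : Integrable (fun y => a y * r y ^ 2) μ :=
    hbdd _ (β * C ^ 2) (ha.mul (hr.pow_const 2)) ((hab.and hCae).mono fun y ⟨⟨h1, h2⟩, h3⟩ => by
      rw [abs_mul, abs_of_nonneg (by linarith : (0:ℝ) ≤ a y)]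
      have : |r y ^ 2| ≤ C ^ 2 := by rw [abs_pow]; exact pow_le_pow_left₀ (abs_nonneg _) h3 2
      exact mul_le_mul h2 this (abs_nonneg _) (by linarith))
  have Ia2r : Integrable (fun y => a y ^ 2 * r y) μ :=
    hbdd _ (β ^ 2 * C) ((ha.pow_const 2).mul hr) ((hab.and hCae).mono fun y ⟨⟨h1, h2⟩, h3⟩ => by
      rw [abs_mul, abs_of_nonneg (by positivity : (0:ℝ) ≤ a y ^ 2)]
      exact mul_le_mul (pow_le_pow_left₀ (by linarith) h2 2) h3 (abs_nonneg _) (by positivity))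
  have Ia2r2 : Integrable (fun y => a y ^ 2 * r y ^ 2) μ :=
    hbdd _ (β ^ 2 * C ^ 2) ((ha.pow_const 2).mul (hr.pow_const 2))
      ((hab.and hCae).mono fun y ⟨⟨h1, h2⟩, h3⟩ => by
      rw [abs_mul, abs_of_nonneg (by positivity : (0:ℝ) ≤ a y ^ 2), abs_pow]
      exact mul_le_mul (pow_le_pow_left₀ (by linarith) h2 2)
        (pow_le_pow_left₀ (abs_nonneg _) h3 2) (by positivity) (by positivity))
  have Ia3r2 : Integrable (fun y => a y ^ 3 * r y ^ 2) μ :=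
    hbdd _ (β ^ 3 * C ^ 2) ((ha.pow_const 3).mul (hr.pow_const 2))
      ((hab.and hCae).mono fun y ⟨⟨h1, h2⟩, h3⟩ => by
      rw [abs_mul, abs_of_nonneg (pow_nonneg (by linarith : (0:ℝ) ≤ a y) 3), abs_pow]
      exact mul_le_mul (pow_le_pow_left₀ (by linarith) h2 3)
        (pow_le_pow_left₀ (abs_nonneg _) h3 2) (by positivity) (pow_nonneg (by linarith) 3))
  have Iainv : Integrable (fun y => (a y)⁻¹) μ :=
    hbdd _ α⁻¹ ha.inv (hab.mono fun y ⟨h1, h2⟩ => by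
      rw [abs_of_nonneg (inv_nonneg.2 (by linarith : (0:ℝ) ≤ a y))]
      exact inv_anti₀ hα h1)
  -- positivity of averages
  have htot : (μ Set.univ).toReal = 1 := by simp [hμ, Real.volume_Ioo]
  have hM0 : 0 < avg01 a := by
    have h1 : α ≤ avg01 a := by
      have := integral_mono_ae (integrable_const α) Ia (hab.mono fun y h => h.1)
      simpa [avg01, htot, Measure.real] using this
    linarith
  have hN : 0 < avg01 fun y => (a y)⁻¹ := by
    have h1 : β⁻¹ ≤ avg01 fun y => (a y)⁻¹ := by
      have := integral_mono_ae (integrable_const β⁻¹) Iainv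
        (hab.mono fun y ⟨h1, h2⟩ => inv_anti₀ (by linarith) h2)
      simpa [avg01, htot, Measure.real] using this
    have : (0:ℝ) < β⁻¹ := inv_pos.2 (by linarith)
    linarith
  refine ⟨hM0, hN, fun s t => ?_⟩
  set M0 := avg01 a with hM0def
  set M1 := avg01 fun y => a y * r y with hM1def
  set M2 := avg01 fun y => a y ^ 2 * r y with hM2def
  set P1 := avg01 fun y => a y * r y ^ 2 with hP1def
  set P2 := avg01 fun y => a y ^ 2 * r y ^ 2 with hP2def
  set P3 := avg01 fun y => a y ^ 3 * r y ^ 2 with hP3def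
  set q := (s * M1 + t * M2) / M0 with hqdef
  have key : s ^ 2 * P1 + 2 * s * t * P2 + t ^ 2 * P3 - 2 * q * (s * M1 + t * M2) + q ^ 2 * M0
      = ∫ y, a y * ((s + t * a y) * r y - q) ^ 2 ∂μ := by
    have expand : (fun y => a y * ((s + t * a y) * r y - q) ^ 2)
        = fun y => s ^ 2 * (a y * r y ^ 2) + (2 * s * t) * (a y ^ 2 * r y ^ 2)
          + t ^ 2 * (a y ^ 3 * r y ^ 2) + (-(2 * q * s)) * (a y * r y)
          + (-(2 * q * t)) * (a y ^ 2 * r y) + q ^ 2 * a y := funext fun y => by ring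
    rw [expand]
    have J1 : Integrable (fun y => s ^ 2 * (a y * r y ^ 2)) μ := Iar2.const_mul _
    have J2 : Integrable (fun y => s ^ 2 * (a y * r y ^ 2)
        + 2 * s * t * (a y ^ 2 * r y ^ 2)) μ := J1.add (Ia2r2.const_mul _)
    have J3 : Integrable (fun y => s ^ 2 * (a y * r y ^ 2)
        + 2 * s * t * (a y ^ 2 * r y ^ 2) + t ^ 2 * (a y ^ 3 * r y ^ 2)) μ :=
      J2.add (Ia3r2.const_mul _)
    have J4 : Integrable (fun y => s ^ 2 * (a y * r y ^ 2)
        + 2 * s * t * (a y ^ 2 * r y ^ 2) + t ^ 2 * (a y ^ 3 * r y ^ 2)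
        + -(2 * q * s) * (a y * r y)) μ := J3.add (Iar.const_mul _)
    have J5 : Integrable (fun y => s ^ 2 * (a y * r y ^ 2)
        + 2 * s * t * (a y ^ 2 * r y ^ 2) + t ^ 2 * (a y ^ 3 * r y ^ 2)
        + -(2 * q * s) * (a y * r y) + -(2 * q * t) * (a y ^ 2 * r y)) μ :=
      J4.add (Ia2r.const_mul _)
    rw [integral_add J5 (Ia.const_mul _), integral_add J4 (Ia2r.const_mul _),
      integral_add J3 (Iar.const_mul _), integral_add J2 (Ia3r2.const_mul _),
      integral_add J1 (Ia2r2.const_mul _),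
      integral_const_mul, integral_const_mul, integral_const_mul, integral_const_mul,
      integral_const_mul, integral_const_mul]
    show _ = s ^ 2 * P1 + 2 * s * t * P2 + t ^ 2 * P3 + -(2 * q * s) * M1
      + -(2 * q * t) * M2 + q ^ 2 * M0
    ring
  have hnn : 0 ≤ ∫ y, a y * ((s + t * a y) * r y - q) ^ 2 ∂μ :=
    integral_nonneg_of_ae (hab.mono fun y ⟨h1, h2⟩ =>
      mul_nonneg (by linarith) (sq_nonneg _))
  rw [← key] at hnn
  have hM0ne : M0 ≠ 0 := ne_of_gt hM0
  have hexp : (P1 - M0⁻¹ * M1 ^ 2) * s ^ 2 + 2 * (P2 - M0⁻¹ * M1 * M2) * s * t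
      + (P3 - M0⁻¹ * M2 ^ 2) * t ^ 2
      = s ^ 2 * P1 + 2 * s * t * P2 + t ^ 2 * P3 - 2 * q * (s * M1 + t * M2) + q ^ 2 * M0 := by
    rw [hqdef]; field_simp; ring
  rw [hexp]; exact hnn


theorem layered_difference_posSemidef (α β : ℝ) (hα : 0 < α) (hαβ : α ≤ β)
    (a r : ℝ → ℝ) (ha : Measurable a) (hr : Measurable r)
    (haI : ∀ y ∈ Set.Ioo (0 : ℝ) 1, a y ∈ Set.Icc α β)
    (hrB : ∃ C : ℝ, ∀ᵐ y ∂(volume.restrict (Set.Ioo (0 : ℝ) 1)), |r y| ≤ C)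
    (u v : ℝ) :
    (!![dOne a r * v ^ 2, dThree a r * u * v, 0;
        dThree a r * u * v, dTwo a r * u ^ 2, 0;
        0, 0, dTwo a r * u ^ 2] : Matrix (Fin 3) (Fin 3) ℝ).PosSemidef := by
  obtain ⟨C, hC⟩ := hrB
  obtain ⟨hM0, hN, hquad⟩ := layered_key α β hα hαβ a r ha hr haI C hC
  rw [Matrix.posSemidef_iff_dotProduct_mulVec]
  constructor
  · show Matrix.conjTranspose _ = _
    ext i j
    fin_cases i <;> fin_cases j <;> simp [Matrix.conjTranspose_apply]
  · intro x
    have h1 := hquad ((avg01 fun y => (a y)⁻¹)⁻¹ * v * x 0) (u * x 1)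
    have h2 := hquad 0 (u * x 2)
    simp only [dotProduct, Matrix.mulVec, Fin.sum_univ_three, star_trivial]
    simp only [Matrix.cons_val', Matrix.cons_val_zero, Matrix.cons_val_one, Matrix.head_cons,
      Matrix.empty_val', Matrix.cons_val_fin_one, Matrix.head_fin_const, Matrix.cons_val_two,
      Matrix.tail_cons, Matrix.of_apply]
    simp only [dOne, dTwo, dThree, ← inv_pow]
    nlinarith [h1, h2]
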